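/- In the octonions O, let L_q : O → O denote left multiplication by q. Then the linear map [L_i, L_j] = L_i∘L_j - L_j∘L_i : O → O is injective (i.e., it is a regular element of so(8): its kernel is zero). -/

import Mathlib

open Quaternion

/-- The octonions, realized as pairs of quaternions via the Cayley–Dickson construction. -/
abbrev Octonion : Type := ℍ[ℝ] × ℍ[ℝ]

/-- Cayley–Dickson multiplication on the octonions. -/
noncomputable def omul (x y : Octonion) : Octonion :=
  (x.1 * y.1 - star y.2 * x.2, y.2 * x.1 + x.2 * star y.1)

/-- Left multiplication `L_q : O → O` by an octonion `q`, as an ℝ-linear map. -/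
noncomputable def LO (q : Octonion) : Octonion →ₗ[ℝ] Octonion where
  toFun x := omul q x
  map_add' x y := by
    simp only [omul, Prod.fst_add, Prod.snd_add, star_add, mul_add, add_mul, Prod.mk_add_mk]
    rw [Prod.mk.injEq]; constructor <;> abel
  map_smul' r x := by
    simp only [omul, Prod.smul_fst, Prod.smul_snd, Quaternion.star_smul, mul_smul_comm, smul_mul_assoc,
      RingHom.id_apply, Prod.smul_mk, star_trivial, smul_sub, smul_add]

/-- The standard imaginary unit `i` of the octonions. -/
noncomputable def iO : Octonion := ((⟨0, 1, 0, 0⟩ : ℍ[ℝ]), 0)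

/-- The standard imaginary unit `j` of the octonions. -/
noncomputable def jO : Octonion := ((⟨0, 0, 1, 0⟩ : ℍ[ℝ]), 0)

theorem stmt_13 : Function.Injective ⇑(LO iO ∘ₗ LO jO - LO jO ∘ₗ LO iO) := by
  rw [← LinearMap.ker_eq_bot, LinearMap.ker_eq_bot']
  intro x hx
  obtain ⟨x1, x2⟩ := x
  simp only [LinearMap.sub_apply, LinearMap.comp_apply, LO, LinearMap.coe_mk, AddHom.coe_mk,
    omul, Prod.ext_iff, Prod.fst_sub, Prod.snd_sub, Prod.fst_zero, Prod.snd_zero,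
    mul_zero, zero_mul, sub_zero, add_zero] at hx
  obtain ⟨h1, h2⟩ := hx
  have r1 := congrArg QuaternionAlgebra.re h1
  have r2 := congrArg QuaternionAlgebra.imI h1
  have r3 := congrArg QuaternionAlgebra.imJ h1
  have r4 := congrArg QuaternionAlgebra.imK h1
  have s1 := congrArg QuaternionAlgebra.re h2
  have s2 := congrArg QuaternionAlgebra.imI h2
  have s3 := congrArg QuaternionAlgebra.imJ h2
  have s4 := congrArg QuaternionAlgebra.imK h2
  clear h1 h2
  simp only [Quaternion.re_mul, Quaternion.imI_mul, Quaternion.imJ_mul, Quaternion.imK_mul,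
    Quaternion.re_star, Quaternion.imI_star, Quaternion.imJ_star, Quaternion.imK_star,
    Quaternion.re_sub, Quaternion.imI_sub, Quaternion.imJ_sub, Quaternion.imK_sub,
    Quaternion.re_add, Quaternion.imI_add, Quaternion.imJ_add, Quaternion.imK_add,
    Quaternion.re_zero, Quaternion.imI_zero, Quaternion.imJ_zero, Quaternion.imK_zero,
    mul_zero, zero_mul, mul_one, one_mul, neg_zero, mul_neg, neg_neg, sub_zero, zero_sub,
    add_zero, zero_add] at r1 r2 r3 r4 s1 s2 s3 s4
  simp only [iO, jO, Quaternion.re_zero, Quaternion.imI_zero, Quaternion.imJ_zero, Quaternion.imK_zero,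
    mul_zero, zero_mul, mul_one, one_mul, neg_zero, mul_neg, neg_neg, sub_zero, zero_sub,
    add_zero, zero_add] at r1 r2 r3 r4 s1 s2 s3 s4
  refine Prod.ext ?_ ?_ <;> ext <;> simp <;> linarith
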